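/- For every natural number m ≥ 1 and every k ≥ 0, the set of natural numbers n such that gcd(m, n) = 1, Ω(n) = k, and m·n is primitive abundant, is finite. -/

import Mathlib

/-- The sum of all divisors of `n`. -/
def sigma1 (n : ℕ) : ℕ := ∑ d ∈ n.divisors, d

/-- `n` is abundant if `σ(n) > 2n`. -/
def Abundant (n : ℕ) : Prop := 2 * n < sigma1 n

/-- `n` is deficient if `σ(n) < 2n`. -/
def Deficient (n : ℕ) : Prop := sigma1 n < 2 * n

/-- A primitive abundant number: abundant and all proper divisors deficient. -/
def PrimitiveAbundant (n : ℕ) : Prop :=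
  Abundant n ∧ ∀ d ∈ n.properDivisors, Deficient d

/-- `Ω(n)`: the number of prime factors of `n` counted with multiplicity. -/
def bigOmega (n : ℕ) : ℕ := n.primeFactorsList.length

open Finset

lemma sigma1_prod {N : ℕ} (hN : N ≠ 0) :
    (sigma1 N : ℚ) = ∏ p ∈ N.primeFactors, ∑ i ∈ range (N.factorization p + 1), (p:ℚ) ^ i := by
  rw [sigma1, Nat.sum_divisors hN]
  push_cast
  rfl

lemma nat_prod {N : ℕ} (hN : N ≠ 0) :
    (N : ℚ) = ∏ p ∈ N.primeFactors, (p:ℚ) ^ (N.factorization p) := by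
  conv_lhs => rw [← Nat.factorization_prod_pow_eq_self hN]
  rw [Finsupp.prod, Nat.support_factorization]
  push_cast
  rfl

lemma pow_le_geom (p e : ℕ) : (p:ℚ)^e ≤ ∑ i ∈ range (e+1), (p:ℚ) ^ i := by
  refine Finset.single_le_sum (f := fun i => (p:ℚ)^i) (fun i _ => by positivity) ?_
  simp

lemma geom_ratio_le {p : ℕ} (hp : 2 ≤ p) (e : ℕ) :
    (∑ i ∈ range (e+1), (p:ℚ)^i) * ((p:ℚ) - 1) ≤ (p:ℚ)^e * (p:ℚ) := by
  rw [geom_sum_mul]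
  have : (p:ℚ)^(e+1) = (p:ℚ)^e * (p:ℚ) := pow_succ _ _
  linarith [this.ge, this.le]

lemma factor_le {p : ℕ} (hp : 2 ≤ p) (a b : ℕ) :
    (∑ i ∈ range (a+b+1), (p:ℚ)^i) / (p:ℚ)^(a+b)
      ≤ (∑ i ∈ range (a+1), (p:ℚ)^i) / (p:ℚ)^a * ((p:ℚ)/((p:ℚ)-1)) := by
  have hpQ : (2:ℚ) ≤ (p:ℚ) := by exact_mod_cast hp
  have hp0 : (0:ℚ) < (p:ℚ) := by linarith
  have hp1 : (0:ℚ) < (p:ℚ) - 1 := by linarith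
  have h1 : (∑ i ∈ range (a+b+1), (p:ℚ)^i) / (p:ℚ)^(a+b) ≤ (p:ℚ)/((p:ℚ)-1) := by
    rw [div_le_div_iff₀ (by positivity) hp1]
    calc (∑ i ∈ range (a+b+1), (p:ℚ)^i) * ((p:ℚ) - 1) ≤ (p:ℚ)^(a+b) * (p:ℚ) :=
          geom_ratio_le hp _
      _ = (p:ℚ) * (p:ℚ)^(a+b) := mul_comm _ _
  have h2 : (1:ℚ) ≤ (∑ i ∈ range (a+1), (p:ℚ)^i) / (p:ℚ)^a := by
    rw [le_div_iff₀ (by positivity), one_mul]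
    exact pow_le_geom p a
  calc (∑ i ∈ range (a+b+1), (p:ℚ)^i) / (p:ℚ)^(a+b) ≤ (p:ℚ)/((p:ℚ)-1) := h1
    _ ≤ (∑ i ∈ range (a+1), (p:ℚ)^i) / (p:ℚ)^a * ((p:ℚ)/((p:ℚ)-1)) :=
        le_mul_of_one_le_left (by positivity) h2

lemma abundancy_mul_le {m n : ℕ} (hm : m ≠ 0) (hn : n ≠ 0) :
    (sigma1 (m*n) : ℚ) / ((m:ℚ)*(n:ℚ)) ≤
      (sigma1 m : ℚ) / (m:ℚ) * ∏ p ∈ n.primeFactors, (p:ℚ)/((p:ℚ)-1) := by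
  have hmn : m * n ≠ 0 := Nat.mul_ne_zero hm hn
  set F := (m*n).primeFactors with hF
  have hFm : m.primeFactors ⊆ F := Nat.primeFactors_mono (Dvd.intro n rfl) hmn
  have hFn : n.primeFactors ⊆ F := Nat.primeFactors_mono (Dvd.intro_left m rfl) hmn
  have e1 : (sigma1 (m*n) : ℚ) =
      ∏ p ∈ F, ∑ i ∈ range ((m*n).factorization p + 1), (p:ℚ) ^ i := sigma1_prod hmn
  have e2 : ((m:ℚ)*(n:ℚ)) = ∏ p ∈ F, (p:ℚ)^((m*n).factorization p) := by
    have := nat_prod hmn; push_cast at this; rw [← this]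
  have e3 : (sigma1 m : ℚ) = ∏ p ∈ F, ∑ i ∈ range (m.factorization p + 1), (p:ℚ) ^ i := by
    rw [sigma1_prod hm]
    refine Finset.prod_subset hFm (fun p _ hpm => ?_)
    rw [← Nat.support_factorization] at hpm
    simp [Finsupp.notMem_support_iff.mp hpm]
  have e4 : (m:ℚ) = ∏ p ∈ F, (p:ℚ)^(m.factorization p) := by
    rw [nat_prod hm]
    refine Finset.prod_subset hFm (fun p _ hpm => ?_)
    rw [← Nat.support_factorization] at hpm
    simp [Finsupp.notMem_support_iff.mp hpm]
  have e5 : (∏ p ∈ n.primeFactors, (p:ℚ)/((p:ℚ)-1)) =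
      ∏ p ∈ F, (if p ∈ n.primeFactors then (p:ℚ)/((p:ℚ)-1) else 1) := by
    rw [← Finset.prod_subset hFn (fun p _ hpn => if_neg hpn)]
    exact Finset.prod_congr rfl (fun p hp => (if_pos hp).symm)
  rw [e1, e2, e3, e4, e5, ← Finset.prod_div_distrib, ← Finset.prod_div_distrib,
    ← Finset.prod_mul_distrib]
  refine Finset.prod_le_prod (fun p _ => by positivity) (fun p hp => ?_)
  have hpp : p.Prime := Nat.prime_of_mem_primeFactors hp
  have hab : (m*n).factorization p = m.factorization p + n.factorization p := by
    rw [Nat.factorization_mul hm hn]; rfl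
  by_cases hpn : p ∈ n.primeFactors
  · rw [if_pos hpn, hab]
    exact factor_le hpp.two_le _ _
  · have hb0 : n.factorization p = 0 := by
      rw [← Nat.support_factorization] at hpn
      exact Finsupp.notMem_support_iff.mp hpn
    rw [if_neg hpn, hab, hb0, mul_one]
    norm_num

lemma prod_ratio_le {n : ℕ} (hn : 2 ≤ n) :
    ∏ p ∈ n.primeFactors, (p:ℚ)/((p:ℚ)-1) ≤
      ((n.minFac:ℚ)/((n.minFac:ℚ)-1)) ^ (bigOmega n) := by
  set q := n.minFac with hq
  have hqp : q.Prime := Nat.minFac_prime (by omega)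
  have hq2 : (2:ℚ) ≤ (q:ℚ) := by exact_mod_cast hqp.two_le
  have hbase : (1:ℚ) ≤ (q:ℚ)/((q:ℚ)-1) := by
    rw [le_div_iff₀ (by linarith)]; linarith
  calc ∏ p ∈ n.primeFactors, (p:ℚ)/((p:ℚ)-1)
      ≤ ∏ _p ∈ n.primeFactors, (q:ℚ)/((q:ℚ)-1) := by
        refine Finset.prod_le_prod (fun p hp => by
          have := (Nat.prime_of_mem_primeFactors hp).two_le
          have h2 : (2:ℚ) ≤ (p:ℚ) := by exact_mod_cast this
          exact div_nonneg (by linarith) (by linarith)) (fun p hp => ?_)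
        have hpp := Nat.prime_of_mem_primeFactors hp
        have hqlep : q ≤ p :=
          Nat.minFac_le_of_dvd hpp.two_le (Nat.dvd_of_mem_primeFactors hp)
        have h2 : (2:ℚ) ≤ (p:ℚ) := by exact_mod_cast hpp.two_le
        have h3 : (q:ℚ) ≤ (p:ℚ) := by exact_mod_cast hqlep
        rw [div_le_div_iff₀ (by linarith) (by linarith)]
        nlinarith
    _ = ((q:ℚ)/((q:ℚ)-1)) ^ n.primeFactors.card := Finset.prod_const _
    _ ≤ ((q:ℚ)/((q:ℚ)-1)) ^ (bigOmega n) := by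
        apply pow_le_pow_right₀ hbase
        exact List.toFinset_card_le _
  
lemma one_add_pow_le {t : ℚ} (h0 : 0 ≤ t) (h1 : t ≤ 1) (k : ℕ) :
    (1 + t)^k ≤ 1 + ((2:ℚ)^k - 1)*t := by
  induction k with
  | zero => simp
  | succ k ih =>
    have h2 : (1:ℚ) ≤ 2^k := one_le_pow₀ (by norm_num)
    have step : (1+t)^(k+1) ≤ (1 + (2^k-1)*t) * (1+t) := by
      rw [pow_succ]
      exact mul_le_mul_of_nonneg_right ih (by linarith)
    refine step.trans ?_
    have key : (0:ℚ) ≤ ((2:ℚ)^k - 1) * t * (1 - t) :=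
      mul_nonneg (mul_nonneg (by linarith) h0) (by linarith)
    have : (2:ℚ)^(k+1) = 2^k * 2 := pow_succ _ _
    nlinarith

lemma bigOmega_mul {a b : ℕ} (ha : a ≠ 0) (hb : b ≠ 0) :
    bigOmega (a*b) = bigOmega a + bigOmega b := by
  unfold bigOmega
  rw [(Nat.perm_primeFactorsList_mul ha hb).length_eq, List.length_append]

lemma bigOmega_prime {p : ℕ} (hp : p.Prime) : bigOmega p = 1 := by
  unfold bigOmega
  rw [Nat.primeFactorsList_prime hp]
  rfl

lemma le_one_of_bigOmega_zero {n : ℕ} (h : bigOmega n = 0) : n ≤ 1 := by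
  unfold bigOmega at h
  rw [List.length_eq_zero_iff] at h
  rcases (Nat.primeFactorsList_eq_nil n).mp h with h | h <;> omega

lemma minFac_le_bound {m n : ℕ} (hm : 1 ≤ m) (hn : 2 ≤ n)
    (h : PrimitiveAbundant (m*n)) : n.minFac ≤ 2 * m * 2 ^ (bigOmega n) := by
  by_contra hqc
  push_neg at hqc
  set k := bigOmega n with hk
  set q := n.minFac with hq
  have hqp : q.Prime := Nat.minFac_prime (by omega)
  have hq2 : (2:ℚ) ≤ (q:ℚ) := by exact_mod_cast hqp.two_le
  have hm0 : m ≠ 0 := by omega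
  have hn0 : n ≠ 0 := by omega
  have hmQ : (0:ℚ) < (m:ℚ) := by exact_mod_cast hm
  have hnQ : (0:ℚ) < (n:ℚ) := by positivity
  -- m is a deficient proper divisor of m*n
  have hdm : sigma1 m < 2*m := by
    refine h.2 m (Nat.mem_properDivisors.2 ⟨Dvd.intro n rfl, ?_⟩)
    have : m * 1 < m * n := Nat.mul_lt_mul_of_le_of_lt (le_refl m) (by omega) (by omega)
    omega
  -- abundance of m*n in ℚ
  have hab : 2 * ((m:ℚ)*(n:ℚ)) < (sigma1 (m*n) : ℚ) := by
    have := h.1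
    unfold Abundant at this
    push_cast
    exact_mod_cast this
  have hF : (2:ℚ) < (sigma1 (m*n) : ℚ) / ((m:ℚ)*(n:ℚ)) := by
    rw [lt_div_iff₀ (by positivity)]
    linarith
  have hA := abundancy_mul_le hm0 hn0
  have hB := prod_ratio_le hn
  -- rewrite base as 1 + t
  have hq1 : (0:ℚ) < (q:ℚ) - 1 := by linarith
  have hbase : (q:ℚ)/((q:ℚ)-1) = 1 + 1/((q:ℚ)-1) := by field_simp; ring
  have ht0 : (0:ℚ) ≤ 1/((q:ℚ)-1) := by positivity
  have ht1 : 1/((q:ℚ)-1) ≤ 1 := by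
    rw [div_le_one hq1]; linarith
  have hC := one_add_pow_le ht0 ht1 k
  -- (2^k - 1)/(q-1) ≤ 1/(2m)
  have hqQ : 2*(m:ℚ)*2^k ≤ (q:ℚ) - 1 := by
    have : 2*m*2^k + 1 ≤ q := hqc
    have h2 : (2*m*2^k + 1 : ℕ) ≤ (q:ℕ) := this
    have := (Nat.cast_le (α := ℚ)).2 h2
    push_cast at this
    linarith
  have hD : ((2:ℚ)^k - 1) * (1/((q:ℚ)-1)) ≤ 1/(2*(m:ℚ)) := by
    rw [mul_one_div, div_le_div_iff₀ hq1 (by positivity)]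
    have h2k : (1:ℚ) ≤ 2^k := one_le_pow₀ (by norm_num)
    nlinarith
  -- σ(m)/m ≤ 2 - 1/m
  have hE : (sigma1 m : ℚ)/(m:ℚ) ≤ 2 - 1/(m:ℚ) := by
    have h1 : (sigma1 m : ℚ) ≤ 2*(m:ℚ) - 1 := by
      have : sigma1 m + 1 ≤ 2*m := hdm
      have := (Nat.cast_le (α := ℚ)).2 this
      push_cast at this
      linarith
    rw [div_le_iff₀ hmQ]
    have : (2 - 1/(m:ℚ)) * (m:ℚ) = 2*(m:ℚ) - 1 := by field_simp
    rw [this]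
    exact h1
  -- P ≤ 1 + 1/(2m)
  have hP : ∏ p ∈ n.primeFactors, (p:ℚ)/((p:ℚ)-1) ≤ 1 + 1/(2*(m:ℚ)) := by
    refine hB.trans ?_
    rw [hbase]
    exact hC.trans (by linarith)
  have hP0 : (0:ℚ) ≤ ∏ p ∈ n.primeFactors, (p:ℚ)/((p:ℚ)-1) := by
    refine Finset.prod_nonneg (fun p hp => ?_)
    have h2 : (2:ℚ) ≤ (p:ℚ) := by exact_mod_cast (Nat.prime_of_mem_primeFactors hp).two_le
    exact div_nonneg (by linarith) (by linarith)
  have hσm0 : (0:ℚ) ≤ (sigma1 m : ℚ)/(m:ℚ) := by positivity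
  have hchain : (2:ℚ) < (2 - 1/(m:ℚ)) * (1 + 1/(2*(m:ℚ))) := by
    calc (2:ℚ) < (sigma1 (m*n) : ℚ) / ((m:ℚ)*(n:ℚ)) := hF
      _ ≤ (sigma1 m : ℚ)/(m:ℚ) * ∏ p ∈ n.primeFactors, (p:ℚ)/((p:ℚ)-1) := hA
      _ ≤ (2 - 1/(m:ℚ)) * (1 + 1/(2*(m:ℚ))) :=
          mul_le_mul hE hP hP0 (by linarith)
  have hexp : (2 - 1/(m:ℚ)) * (1 + 1/(2*(m:ℚ))) = 2 - 1/(2*(m:ℚ)^2) := by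
    field_simp
    ring
  rw [hexp] at hchain
  have : (0:ℚ) < 1/(2*(m:ℚ)^2) := by positivity
  linarith

lemma pan_aux : ∀ k m : ℕ, {n : ℕ | bigOmega n = k ∧ PrimitiveAbundant (m * n)}.Finite := by
  intro k
  induction k with
  | zero =>
    intro m
    refine Set.Finite.subset (Set.finite_Icc 0 1) (fun n hn => ?_)
    simp only [Set.mem_Icc]
    exact ⟨Nat.zero_le n, le_one_of_bigOmega_zero hn.1⟩
  | succ k ih =>
    intro m
    rcases Nat.eq_zero_or_pos m with rfl | hm
    · refine Set.Finite.subset (Set.finite_singleton 0) (fun n hn => ?_)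
      exfalso
      have := hn.2.1
      simp [Abundant, sigma1] at this
    · refine Set.Finite.subset
        (Set.Finite.biUnion (Finset.range (2*m*2^(k+1)+1) : Finset ℕ).finite_toSet
          (fun q _ => Set.Finite.image (fun x => q * x) (ih (m*q)))) ?_
      rintro n ⟨hΩ, hPAN⟩
      have hn2 : 2 ≤ n := by
        by_contra hc
        have : bigOmega n = 0 := by
          interval_cases n <;> simp [bigOmega]
        omega
      set q := n.minFac with hq
      have hqp : q.Prime := Nat.minFac_prime (by omega)
      obtain ⟨r, hr⟩ := Nat.minFac_dvd n
      have hr0 : r ≠ 0 := by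
        rintro rfl
        rw [Nat.mul_zero] at hr
        omega
      have hΩr : bigOmega r = k := by
        rw [hr, bigOmega_mul (Nat.Prime.ne_zero hqp) hr0, bigOmega_prime hqp] at hΩ
        omega
      have hqb : q ≤ 2*m*2^(k+1) := by
        have := minFac_le_bound hm hn2 hPAN
        rwa [hΩ] at this
      refine Set.mem_biUnion (x := q) (by simp only [Finset.coe_range, Set.mem_Iio]; omega) ?_
      refine ⟨r, ⟨hΩr, ?_⟩, hr.symm⟩
      rw [mul_assoc, ← hr]
      exact hPAN

theorem stmt12 (m k : ℕ) (hm : 1 ≤ m) :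
    {n : ℕ | Nat.Coprime m n ∧ bigOmega n = k ∧ PrimitiveAbundant (m * n)}.Finite := by
  exact Set.Finite.subset (pan_aux k m) (fun n hn => ⟨hn.2.1, hn.2.2⟩)
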